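/- Let H be a Dedekind-finite, non-torsion monoid. Then there exists an injective monoid homomorphism Φ from P_fin,0(ℕ) to P_fun(H) such that: Φ maps atoms of P_fin,0(ℕ) to atoms of P_fun(H); L(X) = L(Φ(X)) for every X ∈ P_fin,0(ℕ) (where the sets of lengths are taken in P_fin,0(ℕ) and P_fun(H) respectively); and whenever Φ(X) = Y₁ ⋯ Y_n with Y₁, …, Y_n ∈ P_fun(H), there exist X₁, …, X_n ∈ P_fin,0(ℕ) such that X = X₁ + ⋯ + X_n and Φ(X_i) is associated to Y_i in P_fun(H) for every i. -/

import Mathlib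

open Pointwise

/-- `A` is an atom of the restricted power monoid `P_fin,0(ℕ)` of finite subsets of `ℕ`
containing `0`, under set addition. -/
def IsAtom0 (A : Finset ℕ) : Prop :=
  0 ∈ A ∧ A ≠ {0} ∧
    ∀ X Y : Finset ℕ, 0 ∈ X → 0 ∈ Y → A = X + Y → X = {0} ∨ Y = {0}

/-- `X` belongs to the restricted power monoid `P_fun(H)`: it is a nonempty finite
subset of `H` containing at least one unit of `H`. -/
def MemPfun {H : Type*} [Monoid H] (X : Finset H) : Prop :=
  X.Nonempty ∧ ∃ x ∈ X, IsUnit x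

/-- `A` is an atom of the restricted power monoid `P_fun(H)`. -/
def IsAtomPfun {H : Type*} [Monoid H] [DecidableEq H] (A : Finset H) : Prop :=
  MemPfun A ∧ ¬ IsUnit A ∧
    ∀ X Y : Finset H, MemPfun X → MemPfun Y → A = X * Y → IsUnit X ∨ IsUnit Y

section Helpers
variable {H : Type*} [Monoid H] [DecidableEq H]

lemma myUnit_of_mul_eq_one (hdf : ∀ x y : H, x * y = 1 → y * x = 1) {a b : H}
    (h : a * b = 1) : IsUnit a := ⟨⟨a, b, h, hdf a b h⟩, rfl⟩

lemma myPowInj {x : H} (h : {y : H | ∃ n : ℕ, 1 ≤ n ∧ x ^ n = y}.Infinite) :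
    Function.Injective (fun n : ℕ => x ^ n) := by
  have core : ∀ a b : ℕ, a < b → x ^ a = x ^ b → False := by
    intro a b hlt heq
    have key : ∀ n : ℕ, ∃ m, m < b ∧ x ^ n = x ^ m := by
      intro n
      induction n using Nat.strong_induction_on with
      | _ n ih =>
        rcases lt_or_ge n b with hc | hc
        · exact ⟨n, hc, rfl⟩
        · have hb : n - b + b = n := by omega
          have h1 : x ^ n = x ^ (n - b + a) := by
            calc x ^ n = x ^ (n - b + b) := by rw [hb]
              _ = x ^ (n - b) * x ^ b := pow_add x _ _
              _ = x ^ (n - b) * x ^ a := by rw [heq]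
              _ = x ^ (n - b + a) := (pow_add x _ _).symm
          obtain ⟨m, hm, h2⟩ := ih (n - b + a) (by omega)
          exact ⟨m, hm, h1.trans h2⟩
    have hsub : {y : H | ∃ n : ℕ, 1 ≤ n ∧ x ^ n = y} ⊆ (fun m : ℕ => x ^ m) '' Set.Iio b := by
      rintro y ⟨n, -, rfl⟩
      obtain ⟨m, hm, he⟩ := key n
      exact ⟨m, hm, he.symm⟩
    exact h (Set.Finite.subset ((Set.finite_Iio b).image _) hsub)
  intro a b hab
  rcases lt_trichotomy a b with hc | hc | hc
  · exact absurd hab (by intro hh; exact core a b hc hh)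
  · exact hc
  · exact absurd hab (by intro hh; exact core b a hc hh.symm)

lemma myIsUnit_singleton {w : H} (hw : IsUnit w) : IsUnit ({w} : Finset H) := by
  obtain ⟨u, rfl⟩ := hw
  exact ⟨⟨{(u : H)}, {((u⁻¹ : Hˣ) : H)},
    by rw [Finset.singleton_mul_singleton, Units.mul_inv]; rfl,
    by rw [Finset.singleton_mul_singleton, Units.inv_mul]; rfl⟩, rfl⟩

lemma myIsUnit_finset_iff (hdf : ∀ x y : H, x * y = 1 → y * x = 1) {S : Finset H} :
    IsUnit S ↔ ∃ w : H, IsUnit w ∧ S = {w} := by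
  constructor
  · rintro ⟨u, rfl⟩
    have h1 : (u : Finset H) * ((u⁻¹ : (Finset H)ˣ) : Finset H) = 1 := u.mul_inv
    have h1' : (1 : H) ∈ (u : Finset H) * ((u⁻¹ : (Finset H)ˣ) : Finset H) := by
      rw [h1]; exact Finset.one_mem_one
    obtain ⟨s, hs, t, ht, hst⟩ := Finset.mem_mul.1 h1'
    refine ⟨s, myUnit_of_mul_eq_one hdf hst, ?_⟩
    refine Finset.eq_singleton_iff_unique_mem.2 ⟨hs, fun y hy => ?_⟩
    have hyt : y * t = 1 := by
      have : y * t ∈ (u : Finset H) * ((u⁻¹ : (Finset H)ˣ) : Finset H) :=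
        Finset.mul_mem_mul hy ht
      rw [h1] at this
      exact Finset.mem_one.1 this
    have hts : t * s = 1 := hdf s t hst
    calc y = y * (t * s) := by rw [hts, mul_one]
      _ = (y * t) * s := (mul_assoc y t s).symm
      _ = s := by rw [hyt, one_mul]
  · rintro ⟨w, hw, rfl⟩
    exact myIsUnit_singleton hw

lemma myMemPfun_one : MemPfun (1 : Finset H) :=
  ⟨⟨1, Finset.one_mem_one⟩, 1, Finset.one_mem_one, isUnit_one⟩

lemma myMemPfun_mul {X Y : Finset H} (hX : MemPfun X) (hY : MemPfun Y) : MemPfun (X * Y) := by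
  obtain ⟨hne, u, hu, huu⟩ := hX
  obtain ⟨hne', v, hv, hvv⟩ := hY
  exact ⟨hne.mul hne', u * v, Finset.mul_mem_mul hu hv, huu.mul hvv⟩

lemma myMemPfun_of_isUnit (hdf : ∀ x y : H, x * y = 1 → y * x = 1) {U : Finset H}
    (hU : IsUnit U) : MemPfun U := by
  obtain ⟨w, hw, rfl⟩ := (myIsUnit_finset_iff hdf).1 hU
  exact ⟨⟨w, Finset.mem_singleton_self w⟩, w, Finset.mem_singleton_self w, hw⟩

lemma myMemPfun_prod {l : List (Finset H)} (h : ∀ Y ∈ l, MemPfun Y) : MemPfun l.prod := by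
  induction l with
  | nil => exact myMemPfun_one
  | cons Y l ih =>
    rw [List.prod_cons]
    exact myMemPfun_mul (h Y (List.mem_cons_self)) (ih fun Z hZ => h Z (List.mem_cons_of_mem _ hZ))

end Helpers
section Phi
variable {H : Type*} [Monoid H] [DecidableEq H]

/-- The embedding on sets: `X ↦ {x ^ n : n ∈ X}`. -/
def myPhi (x : H) (X : Finset ℕ) : Finset H := X.image (x ^ ·)

lemma myPhi_mem {x : H} {X : Finset ℕ} {a : H} :
    a ∈ myPhi x X ↔ ∃ n ∈ X, x ^ n = a := Finset.mem_image

lemma myPhi_pow_mem {x : H} {X : Finset ℕ} {n : ℕ} (h : n ∈ X) : x ^ n ∈ myPhi x X :=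
  myPhi_mem.2 ⟨n, h, rfl⟩

lemma myPhi_one (x : H) : myPhi x {0} = 1 := by
  simp only [myPhi, Finset.image_singleton, pow_zero]
  rfl

lemma myPhi_mul (x : H) (X Y : Finset ℕ) : myPhi x (X + Y) = myPhi x X * myPhi x Y := by
  ext a
  simp only [myPhi, Finset.mem_image, Finset.mem_mul, Finset.mem_add]
  constructor
  · rintro ⟨n, ⟨p, hp, q, hq, rfl⟩, rfl⟩
    exact ⟨x ^ p, ⟨p, hp, rfl⟩, x ^ q, ⟨q, hq, rfl⟩, (pow_add x p q).symm⟩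
  · rintro ⟨-, ⟨p, hp, rfl⟩, -, ⟨q, hq, rfl⟩, rfl⟩
    exact ⟨p + q, ⟨p, hp, q, hq, rfl⟩, pow_add x p q⟩

lemma myPhi_inj {x : H} (hinj : Function.Injective fun n : ℕ => x ^ n) :
    Function.Injective (myPhi x) := Finset.image_injective hinj

lemma myPhi_memPfun {x : H} {X : Finset ℕ} (hX : 0 ∈ X) : MemPfun (myPhi x X) :=
  ⟨⟨x ^ 0, myPhi_pow_mem hX⟩, x ^ 0, myPhi_pow_mem hX, by rw [pow_zero]; exact isUnit_one⟩

lemma myPhi_unit_iff (hdf : ∀ x y : H, x * y = 1 → y * x = 1) {x : H}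
    (hinj : Function.Injective fun n : ℕ => x ^ n) {X : Finset ℕ} (hX : 0 ∈ X) :
    IsUnit (myPhi x X) ↔ X = {0} := by
  constructor
  · intro h
    obtain ⟨w, hw, hsing⟩ := (myIsUnit_finset_iff hdf).1 h
    have hcard : X.card = 1 := by
      have h1 : (myPhi x X).card = 1 := by rw [hsing]; exact Finset.card_singleton w
      rwa [myPhi, Finset.card_image_of_injective _ hinj] at h1
    obtain ⟨a, rfl⟩ := Finset.card_eq_one.1 hcard
    rw [Finset.mem_singleton] at hX
    rw [hX]
  · rintro rfl
    rw [myPhi_one]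
    exact isUnit_one

end Phi
section Lift
variable {H : Type*} [Monoid H] [DecidableEq H]

lemma myLift2 (hdf : ∀ a b : H, a * b = 1 → b * a = 1) {x : H}
    (hinj : Function.Injective fun n : ℕ => x ^ n)
    (X : Finset ℕ) (hX : 0 ∈ X) (Y₁ Y₂ : Finset H)
    (h₁ : MemPfun Y₁) (h₂ : MemPfun Y₂) (hprod : Y₁ * Y₂ = myPhi x X) :
    ∃ X₁ X₂ : Finset ℕ, 0 ∈ X₁ ∧ 0 ∈ X₂ ∧ X₁ + X₂ = X ∧
      (∃ V : Finset H, IsUnit V ∧ Y₁ = myPhi x X₁ * V) ∧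
      (∃ U : Finset H, IsUnit U ∧ Y₂ = U * myPhi x X₂) := by
  obtain ⟨-, u, huY, hu⟩ := h₁
  obtain ⟨-, v, hvY, hv⟩ := h₂
  obtain ⟨uu, rfl⟩ := hu
  obtain ⟨vu, rfl⟩ := hv
  have hc : (uu : H) * (vu : H) ∈ myPhi x X := by
    rw [← hprod]; exact Finset.mul_mem_mul huY hvY
  obtain ⟨c, hcX, hxc⟩ := myPhi_mem.1 hc
  -- the "shifted copies" of Y₁ and Y₂ inside the powers of x
  set A : Finset ℕ := X.filter (fun a => x ^ a ∈ Y₁.image (· * (vu : H))) with hAdef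
  set B : Finset ℕ := X.filter (fun b => x ^ b ∈ Y₂.image ((uu : H) * ·)) with hBdef
  have hA : ∀ y ∈ Y₁, ∃ a ∈ A, x ^ a = y * vu := by
    intro y hy
    have hmem : y * (vu : H) ∈ myPhi x X := by
      rw [← hprod]; exact Finset.mul_mem_mul hy hvY
    obtain ⟨a, haX, hax⟩ := myPhi_mem.1 hmem
    refine ⟨a, Finset.mem_filter.2 ⟨haX, ?_⟩, hax⟩
    rw [hax]; exact Finset.mem_image.2 ⟨y, hy, rfl⟩
  have hA' : ∀ a ∈ A, ∃ y ∈ Y₁, x ^ a = y * vu := by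
    intro a ha
    obtain ⟨-, hmem⟩ := Finset.mem_filter.1 ha
    obtain ⟨y, hy, hxy⟩ := Finset.mem_image.1 hmem
    exact ⟨y, hy, hxy.symm⟩
  have hB : ∀ y ∈ Y₂, ∃ b ∈ B, x ^ b = uu * y := by
    intro y hy
    have hmem : (uu : H) * y ∈ myPhi x X := by
      rw [← hprod]; exact Finset.mul_mem_mul huY hy
    obtain ⟨b, hbX, hbx⟩ := myPhi_mem.1 hmem
    refine ⟨b, Finset.mem_filter.2 ⟨hbX, ?_⟩, hbx⟩
    rw [hbx]; exact Finset.mem_image.2 ⟨y, hy, rfl⟩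
  have hB' : ∀ b ∈ B, ∃ y ∈ Y₂, x ^ b = uu * y := by
    intro b hb
    obtain ⟨-, hmem⟩ := Finset.mem_filter.1 hb
    obtain ⟨y, hy, hxy⟩ := Finset.mem_image.1 hmem
    exact ⟨y, hy, hxy.symm⟩
  have hcA : c ∈ A := by
    refine Finset.mem_filter.2 ⟨hcX, ?_⟩
    rw [hxc]; exact Finset.mem_image.2 ⟨uu, huY, rfl⟩
  have hcB : c ∈ B := by
    refine Finset.mem_filter.2 ⟨hcX, ?_⟩
    rw [hxc]; exact Finset.mem_image.2 ⟨vu, hvY, rfl⟩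
  -- the central unit
  set z : H := (((uu * vu)⁻¹ : Hˣ) : H) with hzdef
  have hxc' : x ^ c = ((uu * vu : Hˣ) : H) := by rw [Units.val_mul]; exact hxc
  have hz1 : z * x ^ c = 1 := by rw [hxc']; exact Units.inv_mul _
  have hz1' : x ^ c * z = 1 := by rw [hxc']; exact Units.mul_inv _
  have hzc : ∀ b : ℕ, z * x ^ b = x ^ b * z := by
    intro b
    have h1 : Commute (x ^ c) (x ^ b) := Commute.pow_pow_self x c b
    rw [hxc'] at h1
    exact h1.units_inv_left.eq
  have hvzu : (vu : H) * z * (uu : H) = 1 := by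
    rw [hzdef, mul_inv_rev, Units.val_mul]
    calc (vu : H) * ((vu⁻¹ : Hˣ) * (uu⁻¹ : Hˣ) : H) * uu
        = ((vu : H) * (vu⁻¹ : Hˣ)) * (((uu⁻¹ : Hˣ) : H) * uu) := by
          simp only [Units.val_mul, mul_assoc]
      _ = 1 := by rw [Units.mul_inv, Units.inv_mul, one_mul]
  have hmulkey : ∀ {y₁ y₂ : H} {a b : ℕ}, x ^ a = y₁ * vu → x ^ b = uu * y₂ →
      y₁ * y₂ * x ^ c = x ^ (a + b) := by
    intro y₁ y₂ a b ha hb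
    have e1 : x ^ a * z * x ^ b = y₁ * y₂ := by
      rw [ha, hb]
      calc y₁ * (vu : H) * z * ((uu : H) * y₂)
          = y₁ * ((vu : H) * z * (uu : H)) * y₂ := by simp only [mul_assoc]
        _ = y₁ * y₂ := by rw [hvzu, mul_one]
    calc y₁ * y₂ * x ^ c = x ^ a * z * x ^ b * x ^ c := by rw [e1]
      _ = x ^ a * (z * x ^ b) * x ^ c := by simp only [mul_assoc]
      _ = x ^ a * (x ^ b * z) * x ^ c := by rw [hzc b]
      _ = x ^ a * x ^ b * (z * x ^ c) := by simp only [mul_assoc]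
      _ = x ^ (a + b) := by rw [hz1, mul_one, ← pow_add]
  have hAB : ∀ a ∈ A, ∀ b ∈ B, ∃ d ∈ X, a + b = d + c := by
    intro a ha b hb
    obtain ⟨y₁, hy₁, he₁⟩ := hA' a ha
    obtain ⟨y₂, hy₂, he₂⟩ := hB' b hb
    have : y₁ * y₂ ∈ myPhi x X := by rw [← hprod]; exact Finset.mul_mem_mul hy₁ hy₂
    obtain ⟨d, hdX, hdx⟩ := myPhi_mem.1 this
    refine ⟨d, hdX, hinj ?_⟩
    show x ^ (a + b) = x ^ (d + c)
    rw [← hmulkey he₁ he₂, pow_add, hdx]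
  have hX' : ∀ d ∈ X, ∃ a ∈ A, ∃ b ∈ B, a + b = d + c := by
    intro d hdX
    have : x ^ d ∈ Y₁ * Y₂ := by rw [hprod]; exact myPhi_pow_mem hdX
    obtain ⟨y₁, hy₁, y₂, hy₂, hyy⟩ := Finset.mem_mul.1 this
    obtain ⟨a, ha, he₁⟩ := hA y₁ hy₁
    obtain ⟨b, hb, he₂⟩ := hB y₂ hy₂
    refine ⟨a, ha, b, hb, hinj ?_⟩
    show x ^ (a + b) = x ^ (d + c)
    rw [← hmulkey he₁ he₂, pow_add, hyy]
  have hAne : A.Nonempty := ⟨c, hcA⟩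
  have hBne : B.Nonempty := ⟨c, hcB⟩
  set α := A.min' hAne with hαdef
  set β := B.min' hBne with hβdef
  have hαA : α ∈ A := A.min'_mem hAne
  have hβB : β ∈ B := B.min'_mem hBne
  have hαβ : α + β = c := by
    obtain ⟨d, hdX, hd⟩ := hAB α hαA β hβB
    obtain ⟨a, ha, b, hb, hab⟩ := hX' 0 hX
    have h1 : α ≤ a := A.min'_le a ha
    have h2 : β ≤ b := B.min'_le b hb
    omega
  have hxα : IsUnit (x ^ α) := by
    refine myUnit_of_mul_eq_one hdf (b := x ^ β * z) ?_
    rw [← mul_assoc, ← pow_add, hαβ, hz1']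
  have hxβ : IsUnit (x ^ β) := by
    refine myUnit_of_mul_eq_one hdf (b := x ^ α * z) ?_
    rw [← mul_assoc, ← pow_add, Nat.add_comm β α, hαβ, hz1']
  refine ⟨A.image (· - α), B.image (· - β), ?_, ?_, ?_, ?_, ?_⟩
  · exact Finset.mem_image.2 ⟨α, hαA, Nat.sub_self α⟩
  · exact Finset.mem_image.2 ⟨β, hβB, Nat.sub_self β⟩
  · ext d
    simp only [Finset.mem_add, Finset.mem_image]
    constructor
    · rintro ⟨p, ⟨a, ha, rfl⟩, q, ⟨b, hb, rfl⟩, rfl⟩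
      obtain ⟨d', hd'X, hd'⟩ := hAB a ha b hb
      have h1 : α ≤ a := A.min'_le a ha
      have h2 : β ≤ b := B.min'_le b hb
      have : a - α + (b - β) = d' := by omega
      rw [this]; exact hd'X
    · intro hdX
      obtain ⟨a, ha, b, hb, hab⟩ := hX' d hdX
      have h1 : α ≤ a := A.min'_le a ha
      have h2 : β ≤ b := B.min'_le b hb
      exact ⟨a - α, ⟨a, ha, rfl⟩, b - β, ⟨b, hb, rfl⟩, by omega⟩
  · -- Y₁ = myPhi x (A.image (· - α)) * {x ^ α * vu⁻¹}
    refine ⟨{x ^ α * ((vu⁻¹ : Hˣ) : H)}, myIsUnit_singleton (hxα.mul (vu⁻¹ : Hˣ).isUnit), ?_⟩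
    ext h
    simp only [Finset.mem_mul, Finset.mem_singleton, myPhi, Finset.mem_image]
    constructor
    · intro hh
      obtain ⟨a, ha, he⟩ := hA h hh
      have h1 : α ≤ a := A.min'_le a ha
      refine ⟨x ^ (a - α), ⟨a - α, ⟨a, ha, rfl⟩, rfl⟩, x ^ α * ((vu⁻¹ : Hˣ) : H), rfl, ?_⟩
      calc x ^ (a - α) * (x ^ α * ((vu⁻¹ : Hˣ) : H))
          = x ^ a * ((vu⁻¹ : Hˣ) : H) := by
            rw [← mul_assoc, ← pow_add, Nat.sub_add_cancel h1]
        _ = h := by rw [he, mul_assoc, Units.mul_inv, mul_one]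
    · rintro ⟨g, ⟨p, ⟨a, ha, rfl⟩, rfl⟩, t, rfl, rfl⟩
      obtain ⟨y, hy, he⟩ := hA' a ha
      have h1 : α ≤ a := A.min'_le a ha
      have heq : x ^ (a - α) * (x ^ α * ((vu⁻¹ : Hˣ) : H)) = y := by
        rw [← mul_assoc, ← pow_add, Nat.sub_add_cancel h1, he, mul_assoc,
          Units.mul_inv, mul_one]
      rw [heq]; exact hy
  · -- Y₂ = {uu⁻¹ * x ^ β} * myPhi x (B.image (· - β))
    refine ⟨{((uu⁻¹ : Hˣ) : H) * x ^ β}, myIsUnit_singleton ((uu⁻¹ : Hˣ).isUnit.mul hxβ), ?_⟩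
    ext h
    simp only [Finset.mem_mul, Finset.mem_singleton, myPhi, Finset.mem_image]
    constructor
    · intro hh
      obtain ⟨b, hb, he⟩ := hB h hh
      have h1 : β ≤ b := B.min'_le b hb
      refine ⟨((uu⁻¹ : Hˣ) : H) * x ^ β, rfl, x ^ (b - β), ⟨b - β, ⟨b, hb, rfl⟩, rfl⟩, ?_⟩
      calc ((uu⁻¹ : Hˣ) : H) * x ^ β * x ^ (b - β)
          = ((uu⁻¹ : Hˣ) : H) * x ^ b := by
            rw [mul_assoc, ← pow_add, Nat.add_sub_cancel' h1]
        _ = h := by rw [he, ← mul_assoc, Units.inv_mul, one_mul]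
    · rintro ⟨t, rfl, g, ⟨p, ⟨b, hb, rfl⟩, rfl⟩, rfl⟩
      obtain ⟨y, hy, he⟩ := hB' b hb
      have h1 : β ≤ b := B.min'_le b hb
      have heq : ((uu⁻¹ : Hˣ) : H) * x ^ β * x ^ (b - β) = y := by
        rw [mul_assoc, ← pow_add, Nat.add_sub_cancel' h1, he, ← mul_assoc,
          Units.inv_mul, one_mul]
      rw [heq]; exact hy

end Lift
section LiftN
variable {H : Type*} [Monoid H] [DecidableEq H]

lemma myZeroFinset : (0 : Finset ℕ) = ({0} : Finset ℕ) := rfl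

lemma myLiftN (hdf : ∀ a b : H, a * b = 1 → b * a = 1) {x : H}
    (hinj : Function.Injective fun n : ℕ => x ^ n) :
    ∀ (n : ℕ) (l : List (Finset H)), l.length = n → (∀ Y ∈ l, MemPfun Y) →
    ∀ X : Finset ℕ, 0 ∈ X → l.prod = myPhi x X →
    ∃ m : List (Finset ℕ), (∀ Z ∈ m, 0 ∈ Z) ∧ m.sum = X ∧
      List.Forall₂ (fun Z Y => ∃ U V : Finset H, IsUnit U ∧ IsUnit V ∧
        Y = U * myPhi x Z * V) m l := by
  intro n
  induction n with
  | zero =>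
    intro l hl _ X hX hprod
    rw [List.length_eq_zero_iff] at hl
    subst hl
    rw [List.prod_nil] at hprod
    have hX0 : X = {0} := by
      apply myPhi_inj hinj
      rw [myPhi_one, ← hprod]
    refine ⟨[], fun Z hZ => absurd hZ List.not_mem_nil, ?_, List.Forall₂.nil⟩
    rw [List.sum_nil, hX0, myZeroFinset]
  | succ n ih =>
    intro l hl hmem X hX hprod
    cases l with
    | nil => simp at hl
    | cons Y l' =>
      rw [List.prod_cons] at hprod
      have hY : MemPfun Y := hmem Y (List.mem_cons_self)
      have hl'mem : ∀ Y' ∈ l', MemPfun Y' := fun Z hZ => hmem Z (List.mem_cons_of_mem _ hZ)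
      have hl'P : MemPfun l'.prod := myMemPfun_prod hl'mem
      obtain ⟨X₁, X₂, h01, h02, hsum, ⟨V, hV, hYeq⟩, U, hU, hY₂eq⟩ :=
        myLift2 hdf hinj X hX Y l'.prod hY hl'P hprod
      obtain ⟨Uu, rfl⟩ := hU
      cases l' with
      | nil =>
        rw [List.prod_nil] at hY₂eq
        have hunit : IsUnit (myPhi x X₂) := by
          have : myPhi x X₂ = ((Uu⁻¹ : (Finset H)ˣ) : Finset H) := by
            rw [← one_mul (myPhi x X₂), ← Units.inv_mul Uu, mul_assoc, ← hY₂eq, mul_one]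
          rw [this]
          exact (Uu⁻¹).isUnit
        have hX₂0 : X₂ = {0} := (myPhi_unit_iff hdf hinj h02).1 hunit
        have hX₁X : X₁ = X := by
          rw [← hsum, hX₂0]
          ext d
          simp [Finset.mem_add]
        refine ⟨[X₁], ?_, ?_, ?_⟩
        · intro Z hZ
          rw [List.mem_singleton] at hZ
          subst hZ; exact h01
        · rw [List.sum_cons, List.sum_nil, add_zero, hX₁X]
        · refine List.Forall₂.cons ⟨1, V, isUnit_one, hV, ?_⟩ List.Forall₂.nil
          rw [one_mul, hYeq]
      | cons Y₂ rest =>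
        rw [List.prod_cons] at hY₂eq
        have hkey : (((Uu⁻¹ : (Finset H)ˣ) : Finset H) * Y₂ :: rest).prod = myPhi x X₂ := by
          rw [List.prod_cons, mul_assoc, hY₂eq, ← mul_assoc, Units.inv_mul, one_mul]
        have hmem' : ∀ Z ∈ ((Uu⁻¹ : (Finset H)ˣ) : Finset H) * Y₂ :: rest, MemPfun Z := by
          intro Z hZ
          rcases List.mem_cons.1 hZ with h | h
          · subst h
            exact myMemPfun_mul (myMemPfun_of_isUnit hdf (Uu⁻¹).isUnit)
              (hl'mem Y₂ (List.mem_cons_self))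
          · exact hl'mem Z (List.mem_cons_of_mem _ h)
        have hlen : (((Uu⁻¹ : (Finset H)ˣ) : Finset H) * Y₂ :: rest).length = n := by
          simp only [List.length_cons] at hl ⊢
          omega
        obtain ⟨m₂, hm₂0, hm₂sum, hm₂F⟩ := ih _ hlen hmem' X₂ h02 hkey
        cases hm₂F with
        | cons hhead htail =>
          rename_i Z₂ mrest
          obtain ⟨U₂, V₂, hU₂, hV₂, hZ₂eq⟩ := hhead
          refine ⟨X₁ :: Z₂ :: mrest, ?_, ?_, ?_⟩
          · intro Z hZ
            rcases List.mem_cons.1 hZ with h | h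
            · subst h; exact h01
            · exact hm₂0 Z h
          · rw [List.sum_cons, hm₂sum, hsum]
          · refine List.Forall₂.cons ⟨1, V, isUnit_one, hV, by rw [one_mul, hYeq]⟩ ?_
            refine List.Forall₂.cons ⟨(Uu : Finset H) * U₂, V₂, Uu.isUnit.mul hU₂, hV₂, ?_⟩ htail
            calc Y₂ = (Uu : Finset H) * (((Uu⁻¹ : (Finset H)ˣ) : Finset H) * Y₂) := by
                  rw [← mul_assoc, Units.mul_inv, one_mul]
              _ = (Uu : Finset H) * (U₂ * myPhi x Z₂ * V₂) := by rw [hZ₂eq]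
              _ = (Uu : Finset H) * U₂ * myPhi x Z₂ * V₂ := by simp only [mul_assoc]

end LiftN
section Atoms
variable {H : Type*} [Monoid H] [DecidableEq H]

lemma myAtomPhi (hdf : ∀ a b : H, a * b = 1 → b * a = 1) {x : H}
    (hinj : Function.Injective fun n : ℕ => x ^ n) {A : Finset ℕ} (hA : IsAtom0 A) :
    IsAtomPfun (myPhi x A) := by
  obtain ⟨h0, hne, hmin⟩ := hA
  refine ⟨myPhi_memPfun h0, ?_, ?_⟩
  · intro h; exact hne ((myPhi_unit_iff hdf hinj h0).1 h)
  · intro Xs Ys hXs hYs heq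
    obtain ⟨X₁, X₂, h01, h02, hsum, ⟨V, hV, hXeq⟩, U, hU, hYeq⟩ :=
      myLift2 hdf hinj A h0 Xs Ys hXs hYs heq.symm
    rcases hmin X₁ X₂ h01 h02 hsum.symm with h | h
    · left; rw [hXeq, h, myPhi_one, one_mul]; exact hV
    · right; rw [hYeq, h, myPhi_one, mul_one]; exact hU

lemma myAtom0_of_assoc (hdf : ∀ a b : H, a * b = 1 → b * a = 1) {x : H}
    (hinj : Function.Injective fun n : ℕ => x ^ n) {Z : Finset ℕ} (hZ : 0 ∈ Z)
    {Y U V : Finset H} (hY : IsAtomPfun Y) (hU : IsUnit U) (hV : IsUnit V)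
    (heq : Y = U * myPhi x Z * V) : IsAtom0 Z := by
  obtain ⟨hmem, hnu, hatom⟩ := hY
  refine ⟨hZ, ?_, ?_⟩
  · rintro rfl
    apply hnu
    rw [heq, myPhi_one, mul_one]
    exact hU.mul hV
  · intro P Q hP hQ hPQ
    have h1 : Y = (U * myPhi x P) * (myPhi x Q * V) := by
      rw [heq, hPQ, myPhi_mul]; simp only [mul_assoc]
    rcases hatom _ _ (myMemPfun_mul (myMemPfun_of_isUnit hdf hU) (myPhi_memPfun hP))
        (myMemPfun_mul (myPhi_memPfun hQ) (myMemPfun_of_isUnit hdf hV)) h1 with h | h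
    · left
      obtain ⟨Uu, rfl⟩ := hU
      have h3 : myPhi x P = ((Uu⁻¹ : (Finset H)ˣ) : Finset H) * ((Uu : Finset H) * myPhi x P) := by
        rw [← mul_assoc, Units.inv_mul, one_mul]
      have h2 : IsUnit (myPhi x P) := by rw [h3]; exact (Uu⁻¹).isUnit.mul h
      exact (myPhi_unit_iff hdf hinj hP).1 h2
    · right
      obtain ⟨Vu, rfl⟩ := hV
      have h3 : myPhi x Q = (myPhi x Q * (Vu : Finset H)) * ((Vu⁻¹ : (Finset H)ˣ) : Finset H) := by
        rw [mul_assoc, Units.mul_inv, mul_one]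
      have h2 : IsUnit (myPhi x Q) := by rw [h3]; exact h.mul (Vu⁻¹).isUnit
      exact (myPhi_unit_iff hdf hinj hQ).1 h2

lemma myZeroMemSum : ∀ {l : List (Finset ℕ)}, (∀ A ∈ l, 0 ∈ A) → 0 ∈ l.sum := by
  intro l
  induction l with
  | nil => intro _; rw [List.sum_nil]; exact Finset.zero_mem_zero
  | cons A l ih =>
    intro h
    rw [List.sum_cons]
    have := Finset.add_mem_add (h A (List.mem_cons_self))
      (ih fun B hB => h B (List.mem_cons_of_mem _ hB))
    simpa using this

lemma myPhiSum (x : H) : ∀ {l : List (Finset ℕ)}, (∀ A ∈ l, 0 ∈ A) →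
    myPhi x l.sum = (l.map (myPhi x)).prod := by
  intro l
  induction l with
  | nil =>
    intro _
    rw [List.sum_nil, List.map_nil, List.prod_nil, myZeroFinset, myPhi_one]
  | cons A l ih =>
    intro h
    rw [List.sum_cons, List.map_cons, List.prod_cons, myPhi_mul,
      ih fun B hB => h B (List.mem_cons_of_mem _ hB)]

lemma myForall₂_mem {α β : Type*} {R : α → β → Prop} :
    ∀ {m : List α} {l : List β}, List.Forall₂ R m l → ∀ a ∈ m, ∃ b ∈ l, R a b := by
  intro m l h
  induction h with
  | nil => intro a ha; exact absurd ha List.not_mem_nil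
  | cons hab htail ih =>
    intro a ha
    rcases List.mem_cons.1 ha with h | h
    · subst h; exact ⟨_, List.mem_cons_self, hab⟩
    · obtain ⟨b, hb, hR⟩ := ih a h
      exact ⟨b, List.mem_cons_of_mem _ hb, hR⟩

end Atoms


/-- If `H` is a Dedekind-finite, non-torsion monoid, then there is an injective monoid
homomorphism `Φ` from `P_fin,0(ℕ)` to `P_fun(H)` which is atom-preserving, preserves
sets of lengths, and lifts factorizations: whenever `Φ X` is a product of elements of
`P_fun(H)`, `X` decomposes as a corresponding sum whose images under `Φ` are associated
to the given factors. -/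
theorem stmt_11 {H : Type*} [Monoid H] [DecidableEq H]
    (hdf : ∀ x y : H, x * y = 1 → y * x = 1)
    (hnt : ∃ x : H, {y : H | ∃ n : ℕ, 1 ≤ n ∧ x ^ n = y}.Infinite) :
    ∃ Φ : Finset ℕ → Finset H,
      (∀ X : Finset ℕ, 0 ∈ X → MemPfun (Φ X)) ∧
      Φ {0} = 1 ∧
      (∀ X Y : Finset ℕ, 0 ∈ X → 0 ∈ Y → Φ (X + Y) = Φ X * Φ Y) ∧
      (∀ X Y : Finset ℕ, 0 ∈ X → 0 ∈ Y → Φ X = Φ Y → X = Y) ∧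
      (∀ A : Finset ℕ, IsAtom0 A → IsAtomPfun (Φ A)) ∧
      (∀ X : Finset ℕ, 0 ∈ X → ∀ k : ℕ,
        ((∃ l : List (Finset ℕ), l.length = k ∧ (∀ A ∈ l, IsAtom0 A) ∧ l.sum = X) ↔
          (∃ l : List (Finset H), l.length = k ∧ (∀ A ∈ l, IsAtomPfun A) ∧
            l.prod = Φ X))) ∧
      (∀ X : Finset ℕ, 0 ∈ X → ∀ l : List (Finset H),
        (∀ Y ∈ l, MemPfun Y) → l.prod = Φ X →
        ∃ m : List (Finset ℕ), (∀ Z ∈ m, 0 ∈ Z) ∧ m.sum = X ∧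
          List.Forall₂ (fun Z Y =>
            ∃ U V : Finset H, IsUnit U ∧ IsUnit V ∧ Y = U * Φ Z * V) m l) := by
  obtain ⟨x, hx⟩ := hnt
  have hinj := myPowInj hx
  refine ⟨myPhi x, fun X hX => myPhi_memPfun hX, myPhi_one x, fun X Y _ _ => myPhi_mul x X Y,
    fun X Y _ _ h => myPhi_inj hinj h, fun A hA => myAtomPhi hdf hinj hA, ?_, ?_⟩
  · intro X hX k
    constructor
    · rintro ⟨l, hlen, hatoms, hsum⟩
      refine ⟨l.map (myPhi x), by rw [List.length_map, hlen], ?_, ?_⟩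
      · intro A hA
        obtain ⟨B, hB, rfl⟩ := List.mem_map.1 hA
        exact myAtomPhi hdf hinj (hatoms B hB)
      · rw [← myPhiSum x (fun A hA => (hatoms A hA).1), hsum]
    · rintro ⟨l, hlen, hatoms, hprod⟩
      obtain ⟨m, hm0, hmsum, hmF⟩ := myLiftN hdf hinj l.length l rfl
        (fun Y hY => (hatoms Y hY).1) X hX hprod
      refine ⟨m, by rw [hmF.length_eq, hlen], ?_, hmsum⟩
      intro Z hZ
      obtain ⟨Y, hY, U, V, hU, hV, hYeq⟩ := myForall₂_mem hmF Z hZ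
      exact myAtom0_of_assoc hdf hinj (hm0 Z hZ) (hatoms Y hY) hU hV hYeq
  · intro X hX l hmem hprod
    exact myLiftN hdf hinj l.length l rfl hmem X hX hprod
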